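/- Let P be a three-element set, made into a projection algebra by defining qθ_p = p for all p, q ∈ P (the projection algebra of the 3×3 square band; the axioms (P1)–(P5) hold). Then the quotient of the free semigroup on X_P = {x_p : p ∈ P} by the congruence generated by the relations x_p² = x_p, (x_p x_q)² = x_p x_q, and x_p x_q x_p = x_{qθ_p} for all p, q ∈ P is an infinite semigroup. -/

import Mathlib

structure ProjectionAlgebra (P : Type*) where
  th : P → P → P
  P1 : ∀ p, th p p = p
  P2 : ∀ p q, th p (th p q) = th p q
  P3 : ∀ p q, th p (th q p) = th p q
  P4 : ∀ p q r, th p (th q (th p r)) = th (th p q) r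
  P5 : ∀ p q r, th q (th p (th q (th p r))) = th q (th p r)

namespace ProjectionAlgebra

variable {P : Type*} (A : ProjectionAlgebra P)

/-- `p ≤ q` iff `p = pθ_q`. -/
def le (p q : P) : Prop := p = A.th q p

/-- `p ≤F q` iff `p = qθ_p`. -/
def leF (p q : P) : Prop := p = A.th p q

/-- `p F q` iff `p ≤F q` and `q ≤F p`. -/
def Frel (p q : P) : Prop := A.leF p q ∧ A.leF q p

/-- `(e, f)` is a `p`-linked pair: `f = eθ_pθ_f` and `e = fθ_pθ_e`. -/
def Linked (p e f : P) : Prop :=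
  f = A.th f (A.th p e) ∧ e = A.th e (A.th p f)

/-- `q θ_{p₁} ⋯ θ_{p_k}` for the list `ps = [p₁, …, p_k]`. -/
def applyList (q : P) (ps : List P) : P := ps.foldl (fun x p => A.th p x) q

end ProjectionAlgebra

/-- The defining relations of the free projection-generated regular *-semigroup
`PG(P)`: `x_p² = x_p`, `(x_p x_q)² = x_p x_q`, and `x_p x_q x_p = x_{qθ_p}`,
for `p, q ∈ P`, as a binary relation on the free semigroup over `P`. -/
def PGrel {P : Type*} (A : ProjectionAlgebra P) :
    FreeSemigroup P → FreeSemigroup P → Prop := fun u v =>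
  (∃ p : P, u = FreeSemigroup.of p * FreeSemigroup.of p ∧ v = FreeSemigroup.of p) ∨
  (∃ p q : P, u = (FreeSemigroup.of p * FreeSemigroup.of q) *
      (FreeSemigroup.of p * FreeSemigroup.of q) ∧
    v = FreeSemigroup.of p * FreeSemigroup.of q) ∨
  (∃ p q : P, u = FreeSemigroup.of p * FreeSemigroup.of q * FreeSemigroup.of p ∧
    v = FreeSemigroup.of (A.th p q))

/-- The word `x_h x_{t₁} ⋯ x_{t_m}` in the free semigroup. -/
def word1 {P : Type*} (h : P) (t : List P) : FreeSemigroup P :=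
  t.foldl (fun w p => w * FreeSemigroup.of p) (FreeSemigroup.of h)

/-- The reversed word `x_{t_m} ⋯ x_{t₁} x_h` in the free semigroup. -/
def word1r {P : Type*} (h : P) (t : List P) : FreeSemigroup P :=
  t.foldl (fun w p => FreeSemigroup.of p * w) (FreeSemigroup.of h)

/-- The projection algebra of the 3×3 square band: a three-element set with
`qθ_p = p` for all `p, q`. -/
def SquareBand3 : ProjectionAlgebra (Fin 3) where
  th := fun p _ => p
  P1 := fun _ => rfl
  P2 := fun _ _ => rfl
  P3 := fun _ _ => rfl
  P4 := fun _ _ _ => rfl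
  P5 := fun _ _ _ => rfl

section Aux18

/-- pairing coefficients: `wt p q * wt q p = 1`, `wt 0 1 * wt 1 2 * wt 2 0 = 2`. -/
def wt : Fin 3 → Fin 3 → ℚ := ![![1, 2, 1], ![1/2, 1, 1], ![1, 1, 1]]

/-- rank-one matrix supported on row `p`, with that row equal to `c • wt q`. -/
def melt (p q : Fin 3) (c : ℚ) : Matrix (Fin 3) (Fin 3) ℚ :=
  Matrix.of fun i j => if i = p then c * wt q j else 0

lemma melt_mul (p q r s : Fin 3) (c d : ℚ) :
    melt p q c * melt r s d = melt p s (c * wt q r * d) := by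
  ext i j
  simp only [melt, Matrix.of_apply, Matrix.mul_apply]
  rcases eq_or_ne i p with h | h
  · simp [h, ite_mul, mul_ite, Finset.sum_ite_eq']
    ring
  · simp [h]

lemma wt_diag (p : Fin 3) : wt p p = 1 := by fin_cases p <;> norm_num [wt]

lemma wt_inv (p q : Fin 3) : wt p q * wt q p = 1 := by
  fin_cases p <;> fin_cases q <;> norm_num [wt]

lemma melt_smul (p q : Fin 3) (c d : ℚ) : c • melt p q d = melt p q (c * d) := by
  ext i j; simp only [melt, Matrix.smul_apply, Matrix.of_apply, smul_eq_mul]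
  split <;> ring

def myE (p : Fin 3) : Matrix (Fin 3) (Fin 3) ℚ := melt p p 1

lemma myE_idem (p : Fin 3) : myE p * myE p = myE p := by
  rw [myE, melt_mul, wt_diag]; norm_num

lemma myE_sand (p q : Fin 3) : myE p * myE q * myE p = myE p := by
  rw [myE, myE, melt_mul, melt_mul]
  rw [show 1 * wt p q * 1 * wt q p * 1 = wt p q * wt q p by ring, wt_inv]

noncomputable def myφ : FreeSemigroup (Fin 3) →ₙ* Matrix (Fin 3) (Fin 3) ℚ :=
  FreeSemigroup.lift myE

lemma myφ_rel : ∀ u v, ConGen.Rel (PGrel SquareBand3) u v → myφ u = myφ v := by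
  intro u v h
  induction h with
  | of x y hxy =>
    rcases hxy with ⟨p, rfl, rfl⟩ | ⟨p, q, rfl, rfl⟩ | ⟨p, q, rfl, rfl⟩
    · simp [map_mul, myE_idem, myφ]
    · simp only [map_mul, myφ, FreeSemigroup.lift_of]
      rw [← mul_assoc, myE_sand]
    · simp only [map_mul, myφ, FreeSemigroup.lift_of, myE_sand]
      rfl
  | refl x => rfl
  | symm _ ih => exact ih.symm
  | trans _ _ ih1 ih2 => exact ih1.trans ih2
  | mul _ _ ih1 ih2 => simp [map_mul, ih1, ih2]

def myg : FreeSemigroup (Fin 3) :=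
  FreeSemigroup.of 0 * FreeSemigroup.of 1 * FreeSemigroup.of 2

def myw : ℕ → FreeSemigroup (Fin 3)
  | 0 => myg
  | n + 1 => myg * myw n

def Eg : Matrix (Fin 3) (Fin 3) ℚ := melt 0 2 2

lemma myφ_g : myφ myg = Eg := by
  simp only [myφ, myg, map_mul, FreeSemigroup.lift_of, myE, melt_mul, Eg]
  norm_num [wt, Matrix.cons_val_two, Matrix.tail_cons, Matrix.head_cons]

lemma Eg_sq : Eg * Eg = (2 : ℚ) • Eg := by
  rw [Eg, melt_mul, melt_smul]
  norm_num [wt, Matrix.cons_val_two, Matrix.tail_cons, Matrix.head_cons]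

lemma myφ_w (n : ℕ) : myφ (myw n) = ((2 : ℚ) ^ n) • Eg := by
  induction n with
  | zero => simp [myw, myφ_g]
  | succ n ih =>
    rw [myw, map_mul, myφ_g, ih, Matrix.mul_smul, Eg_sq, smul_smul, ← pow_succ]

/-- The quotient of the free semigroup on `X_P = {x_p : p ∈ P}` by the
congruence generated by `x_p² = x_p`, `(x_p x_q)² = x_p x_q`,
`x_p x_q x_p = x_{qθ_p}`, where `P` is the three-element projection algebra of the
3×3 square band, is an infinite semigroup. -/
theorem stmt18 : Infinite (conGen (PGrel SquareBand3)).Quotient := by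
  apply Infinite.of_injective (fun n : ℕ => ((myw n : FreeSemigroup (Fin 3)) :
    (conGen (PGrel SquareBand3)).Quotient))
  intro m n h
  rw [Con.eq, conGen] at h
  have key := myφ_rel _ _ h
  rw [myφ_w, myφ_w] at key
  have h1 := congrArg (fun M => M 0 0) key
  simp only [Eg, melt, Matrix.smul_apply, Matrix.of_apply, if_pos rfl,
    smul_eq_mul, if_true, mul_one] at h1
  norm_num [wt, Matrix.cons_val_two, Matrix.tail_cons, Matrix.head_cons] at h1
  exact h1

end Aux18
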